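/- Basis from convergence: Let S = (B; R, E) be a linear rewriting system modulo and B' ⊆ BNF_S a subset of monomial S⁺-normal forms such that the image [B']_E is a basis of the module NF_S / ⟨E⟩_k of normal forms modulo E. If the positive rewriting system S⁺ is convergent modulo E (terminating and confluent), then the image [B']_S is a basis of the module ⟨B⟩_k / ⟨R ⊔ E⟩_k presented by S. -/

import Mathlib

variable {k : Type*} [CommRing k] {B : Type*}

/-- One generating step of the linear `E`-congruence on the free module
`B →₀ k`: a monomial-invertible relation `b → λ·b'` of `E`, applied linearly
inside a vector. -/
def EStepV (Erel : B → B → kˣ → Prop) (u v : B →₀ k) : Prop :=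
  ∃ (b b' : B) (lam : kˣ) (μ : k) (w : B →₀ k),
    Erel b b' lam ∧ u = w + μ • Finsupp.single b 1 ∧
      v = w + (μ * (lam : k)) • Finsupp.single b' 1

/-- The `E`-congruence `~_E` on the free module: the equivalence generated
linearly by the monomial-invertible relations of `E`. -/
def ECong (Erel : B → B → kˣ → Prop) : (B →₀ k) → (B →₀ k) → Prop :=
  Relation.EqvGen (EStepV Erel)

/-- Projective `E`-congruence of monomials: `b ~_E b'` up to an invertible
scalar. -/
def ProjE (Erel : B → B → kˣ → Prop) (b b' : B) : Prop :=
  ∃ lam : kˣ, ECong Erel (Finsupp.single b (1 : k)) ((lam : k) • Finsupp.single b' 1)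

/-- The `E`-projective support of a vector: all monomials projectively
`E`-congruent to a monomial of its ordinary support. -/
def SuppE (Erel : B → B → kˣ → Prop) (v : B →₀ k) : Set B :=
  {b | ∃ b' ∈ v.support, ProjE Erel b b'}

/-- An `S`-rewriting step of the linear rewriting system modulo `S = (R, E)`:
`u ~_E λ·s(r) + v → λ·t(r) + v ~_E w` for a relation `r : b → t` of `R` and
`λ ≠ 0`. -/
def SStepL (Rrel : B → (B →₀ k) → Prop) (Erel : B → B → kˣ → Prop)
    (u w : B →₀ k) : Prop :=
  ∃ (b : B) (t : B →₀ k) (lam : k) (v : B →₀ k),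
    lam ≠ 0 ∧ Rrel b t ∧
      ECong Erel u (lam • Finsupp.single b 1 + v) ∧
      ECong Erel (lam • t + v) w

/-- A positive `S`-rewriting step: moreover the rewritten monomial `s(r)` does
not occur, up to projective `E`-congruence, in the remainder `v`. -/
def PosStepL (Rrel : B → (B →₀ k) → Prop) (Erel : B → B → kˣ → Prop)
    (u w : B →₀ k) : Prop :=
  ∃ (b : B) (t : B →₀ k) (lam : k) (v : B →₀ k),
    lam ≠ 0 ∧ Rrel b t ∧ b ∉ SuppE Erel v ∧
      ECong Erel u (lam • Finsupp.single b 1 + v) ∧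
      ECong Erel (lam • t + v) w

/-- A positive `S`-rewriting sequence: an `E`-congruence (length zero) or a
nonempty composite of positive `S`-rewriting steps. -/
def PSeq (Rrel : B → (B →₀ k) → Prop) (Erel : B → B → kˣ → Prop)
    (u v : B →₀ k) : Prop :=
  ECong Erel u v ∨ Relation.TransGen (PosStepL Rrel Erel) u v

/-- A monomial `S⁺`-normal form: a monomial not `E`-projectively congruent to
the source of any relation of `R`. -/
def IsBNF (Rrel : B → (B →₀ k) → Prop) (Erel : B → B → kˣ → Prop) (b : B) : Prop :=
  ¬ ∃ (b' : B) (t : B →₀ k), Rrel b' t ∧ ProjE Erel b b'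

/-- The submodule `NF_S` of normal forms, spanned by the monomial
`S⁺`-normal forms. -/
noncomputable def NFmod (Rrel : B → (B →₀ k) → Prop) (Erel : B → B → kˣ → Prop) :
    Submodule k (B →₀ k) :=
  Submodule.span k {x | ∃ b : B, IsBNF Rrel Erel b ∧ x = Finsupp.single b (1 : k)}

/-- The submodule `⟨E⟩_k` generated by the differences of the relations of `E`. -/
noncomputable def NE (Erel : B → B → kˣ → Prop) : Submodule k (B →₀ k) :=
  Submodule.span k {x | ∃ (b b' : B) (lam : kˣ), Erel b b' lam ∧
    x = Finsupp.single b (1 : k) - (lam : k) • Finsupp.single b' 1}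

/-- The submodule `⟨R ⊔ E⟩_k` presented by `S`. -/
noncomputable def NSub (Rrel : B → (B →₀ k) → Prop) (Erel : B → B → kˣ → Prop) :
    Submodule k (B →₀ k) :=
  Submodule.span k
    ({x | ∃ b t, Rrel b t ∧ x = Finsupp.single b 1 - t} ∪
     {x | ∃ (b b' : B) (lam : kˣ), Erel b b' lam ∧
        x = Finsupp.single b (1 : k) - (lam : k) • Finsupp.single b' 1})


/-! ### Auxiliary lemmas -/

namespace Stmt10Aux

open Finsupp

variable {Rrel : B → (B →₀ k) → Prop} {Erel : B → B → kˣ → Prop}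

lemma estep_diff_mem {u v : B →₀ k} (h : EStepV Erel u v) : u - v ∈ NE Erel := by
  obtain ⟨b, b', lam, mu, w, hE, hu, hv⟩ := h
  have he : u - v = mu • (Finsupp.single b (1 : k) - (lam : k) • Finsupp.single b' 1) := by
    rw [hu, hv]; module
  rw [he]
  exact Submodule.smul_mem _ _ (Submodule.subset_span ⟨b, b', lam, hE, rfl⟩)

lemma econg_diff_mem {u v : B →₀ k} (h : ECong Erel u v) : u - v ∈ NE Erel := by
  have h' : Relation.EqvGen (EStepV Erel) u v := h
  clear h
  induction h' with
  | rel x y h => exact estep_diff_mem h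
  | refl x => simp
  | symm x y _ ih => simpa using (NE Erel).neg_mem ih
  | trans x y z _ _ ih₁ ih₂ =>
    have := (NE Erel).add_mem ih₁ ih₂
    rwa [sub_add_sub_cancel] at this

lemma econg_sub_all {d : B →₀ k} (hd : d ∈ NE Erel) :
    ∀ (u : B →₀ k) (c : k), ECong Erel u (u - c • d) := by
  refine Submodule.span_induction (fun x hx => ?_) (fun u c => ?_)
    (fun x y hx hy ihx ihy u c => ?_) (fun a x hx ihx u c => ?_) hd
  · obtain ⟨b, b', lam, hE, rfl⟩ := hx
    intro u c
    exact Relation.EqvGen.rel _ _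
      ⟨b, b', lam, c, u - c • Finsupp.single b 1, hE, by module, by module⟩
  · simpa using (show ECong Erel u u from Relation.EqvGen.refl u)
  · have h1 := ihx u c
    have h2 := ihy (u - c • x) c
    refine Relation.EqvGen.trans _ _ _ h1 ?_
    have he : u - c • (x + y) = u - c • x - c • y := by module
    rw [he]; exact h2
  · have h1 := ihx u (c * a)
    rw [smul_smul]; exact h1

lemma econg_of_diff_mem {u v : B →₀ k} (h : u - v ∈ NE Erel) : ECong Erel u v := by
  have := econg_sub_all h u 1
  rwa [one_smul, sub_sub_cancel] at this

lemma econg_refl (u : B →₀ k) : ECong Erel u u := Relation.EqvGen.refl u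

lemma econg_symm {u v : B →₀ k} (h : ECong Erel u v) : ECong Erel v u :=
  Relation.EqvGen.symm _ _ h

lemma econg_trans {u v w : B →₀ k} (h1 : ECong Erel u v) (h2 : ECong Erel v w) :
    ECong Erel u w := Relation.EqvGen.trans _ _ _ h1 h2

lemma projE_iff {a b : B} : ProjE Erel a b ↔
    ∃ lam : kˣ, Finsupp.single a (1 : k) - (lam : k) • Finsupp.single b 1 ∈ NE Erel := by
  constructor
  · rintro ⟨lam, h⟩; exact ⟨lam, econg_diff_mem h⟩
  · rintro ⟨lam, h⟩; exact ⟨lam, econg_of_diff_mem h⟩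

lemma projE_refl (a : B) : ProjE (k := k) Erel a a :=
  ⟨1, by rw [Units.val_one, one_smul]; exact econg_refl _⟩

lemma projE_symm {a b : B} (h : ProjE Erel a b) : ProjE Erel b a := by
  rw [projE_iff] at h ⊢
  obtain ⟨lam, h⟩ := h
  refine ⟨lam⁻¹, ?_⟩
  have he : Finsupp.single b (1 : k) - ((lam⁻¹ : kˣ) : k) • Finsupp.single a 1
      = (-((lam⁻¹ : kˣ) : k)) • (Finsupp.single a (1 : k) - (lam : k) • Finsupp.single b 1)
        + (1 - ((lam⁻¹ : kˣ) : k) * (lam : k)) • Finsupp.single b 1 := by module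
  rw [he, Units.inv_mul, sub_self, zero_smul, add_zero]
  exact Submodule.smul_mem _ _ h

lemma projE_trans {a b c : B} (h1 : ProjE Erel a b) (h2 : ProjE Erel b c) :
    ProjE Erel a c := by
  rw [projE_iff] at h1 h2 ⊢
  obtain ⟨lam, h1⟩ := h1
  obtain ⟨mu, h2⟩ := h2
  refine ⟨lam * mu, ?_⟩
  have he : Finsupp.single a (1 : k) - ((lam * mu : kˣ) : k) • Finsupp.single c 1
      = (Finsupp.single a (1 : k) - (lam : k) • Finsupp.single b 1)
        + (lam : k) • (Finsupp.single b (1 : k) - (mu : k) • Finsupp.single c 1) := by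
    rw [Units.val_mul]; module
  rw [he]
  exact Submodule.add_mem _ h1 (Submodule.smul_mem _ _ h2)

lemma not_mem_suppE_of_subset {b : B} {u v : B →₀ k} (hsub : u.support ⊆ v.support)
    (h : b ∉ SuppE Erel v) : b ∉ SuppE Erel u := by
  rintro ⟨a, ha, hp⟩
  exact h ⟨a, hsub ha, hp⟩

lemma not_mem_suppE_add {b : B} {u v : B →₀ k} (hu : b ∉ SuppE Erel u)
    (hv : b ∉ SuppE Erel v) : b ∉ SuppE Erel (u + v) := by
  classical
  rintro ⟨a, ha, hp⟩
  rcases Finset.mem_union.1 (Finsupp.support_add ha) with h | h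
  · exact hu ⟨a, h, hp⟩
  · exact hv ⟨a, h, hp⟩

lemma not_mem_suppE_smul {b : B} {c : k} {u : B →₀ k} (hu : b ∉ SuppE Erel u) :
    b ∉ SuppE Erel (c • u) :=
  not_mem_suppE_of_subset Finsupp.support_smul hu

/-- The class part of a vector: restriction of its support to the projective
`E`-class of `b`. -/
noncomputable def classPart (Erel : B → B → kˣ → Prop) (b : B) (v : B →₀ k) : B →₀ k :=
  letI := Classical.decPred fun x => ProjE Erel x b
  v.filter fun x => ProjE Erel x b

open Classical in
lemma classPart_apply (Erel : B → B → kˣ → Prop) (b : B) (v : B →₀ k) (a : B) :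
    classPart Erel b v a = if ProjE Erel a b then v a else 0 := by
  classical
  simp [classPart, Finsupp.filter_apply]

lemma classPart_zero (b : B) : classPart Erel b (0 : B →₀ k) = 0 := by
  ext a; rw [classPart_apply]; split_ifs <;> simp

lemma classPart_add (b : B) (u v : B →₀ k) :
    classPart Erel b (u + v) = classPart Erel b u + classPart Erel b v := by
  ext a
  simp only [Finsupp.add_apply, classPart_apply]
  split_ifs <;> simp

lemma classPart_smul (b : B) (c : k) (v : B →₀ k) :
    classPart Erel b (c • v) = c • classPart Erel b v := by
  ext a
  simp only [Finsupp.smul_apply, classPart_apply]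
  split_ifs <;> simp

lemma classPart_sub (b : B) (u v : B →₀ k) :
    classPart Erel b (u - v) = classPart Erel b u - classPart Erel b v := by
  ext a
  simp only [Finsupp.sub_apply, classPart_apply]
  split_ifs <;> simp

lemma classPart_eq_zero {b : B} {v : B →₀ k} (h : ∀ a ∈ v.support, ¬ ProjE Erel a b) :
    classPart Erel b v = 0 := by
  ext a
  rw [classPart_apply, Finsupp.coe_zero, Pi.zero_apply]
  split_ifs with hp
  · by_contra hne
    exact h a (Finsupp.mem_support_iff.2 hne) hp
  · rfl

lemma classPart_single_pos {a b : B} (m : k) (h : ProjE Erel a b) :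
    classPart Erel b (Finsupp.single a m) = Finsupp.single a m := by
  classical
  ext x
  rw [classPart_apply]
  split_ifs with hx
  · rfl
  · rw [Finsupp.single_apply, if_neg (fun hax : a = x => hx (hax ▸ h))]

lemma classPart_single_neg {a b : B} (m : k) (h : ¬ ProjE Erel a b) :
    classPart Erel b (Finsupp.single a m) = 0 := by
  apply classPart_eq_zero
  intro x hx hp
  have hxa := Finset.mem_singleton.1 (Finsupp.support_single_subset hx)
  subst hxa
  exact h hp

lemma classPart_support_projE {b : B} {v : B →₀ k} {a : B}
    (ha : a ∈ (classPart Erel b v).support) : ProjE Erel a b := by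
  rw [Finsupp.mem_support_iff, classPart_apply] at ha
  by_contra h
  rw [if_neg h] at ha
  exact ha rfl

lemma classPart_mem_NE {b : B} {v : B →₀ k} (hv : v ∈ NE Erel) :
    classPart Erel b v ∈ NE Erel := by
  refine Submodule.span_induction (fun x hx => ?_) ?_ (fun x y _ _ ihx ihy => ?_)
    (fun c x _ ihx => ?_) hv
  · obtain ⟨p, q, lam, hE, rfl⟩ := hx
    have hpq : ProjE Erel p q :=
      ⟨lam, econg_of_diff_mem (Submodule.subset_span ⟨p, q, lam, hE, rfl⟩)⟩
    rw [classPart_sub, classPart_smul]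
    by_cases hp : ProjE Erel p b
    · rw [classPart_single_pos _ hp, classPart_single_pos _ (projE_trans (projE_symm hpq) hp)]
      exact Submodule.subset_span ⟨p, q, lam, hE, rfl⟩
    · rw [classPart_single_neg _ hp, classPart_single_neg _ fun hq => hp (projE_trans hpq hq),
        smul_zero, sub_zero]
      exact Submodule.zero_mem _
  · rw [classPart_zero]; exact Submodule.zero_mem _
  · rw [classPart_add]; exact Submodule.add_mem _ ihx ihy
  · rw [classPart_smul]; exact Submodule.smul_mem _ _ ihx

lemma collapse (b : B) (v : B →₀ k) :
    (∀ a ∈ v.support, ProjE Erel a b) →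
    ∃ σ : k, v - σ • Finsupp.single b 1 ∈ NE Erel := by
  classical
  induction v using Finsupp.induction with
  | zero => exact fun _ => ⟨0, by simp⟩
  | single_add a m f haf hm ih =>
    intro hsupp
    have hmem : ∀ x ∈ f.support, x ∈ (Finsupp.single a m + f).support := by
      intro x hx
      rw [Finsupp.mem_support_iff, Finsupp.add_apply, Finsupp.single_apply,
        if_neg (fun h : a = x => haf (h ▸ hx)), zero_add]
      exact Finsupp.mem_support_iff.1 hx
    obtain ⟨σ', hσ'⟩ := ih fun x hx => hsupp x (hmem x hx)
    have hab : ProjE Erel a b := by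
      apply hsupp
      rw [Finsupp.mem_support_iff, Finsupp.add_apply,
        Finsupp.notMem_support_iff.1 haf, add_zero, Finsupp.single_eq_same]
      exact hm
    obtain ⟨mu, hmu⟩ := hab
    have h1 : Finsupp.single a (1 : k) - (mu : k) • Finsupp.single b 1 ∈ NE Erel :=
      econg_diff_mem hmu
    refine ⟨m * (mu : k) + σ', ?_⟩
    have hs : Finsupp.single a m = m • Finsupp.single a (1 : k) := by
      rw [Finsupp.smul_single, smul_eq_mul, mul_one]
    have he : (Finsupp.single a m + f) - (m * (mu : k) + σ') • Finsupp.single b 1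
        = m • (Finsupp.single a (1 : k) - (mu : k) • Finsupp.single b 1)
          + (f - σ' • Finsupp.single b 1) := by
      rw [hs]; module
    rw [he]
    exact Submodule.add_mem _ (Submodule.smul_mem _ _ h1) hσ'

lemma decomp (b : B) (v : B →₀ k) :
    ∃ (σ : k) (v' : B →₀ k), (b ∉ SuppE Erel v') ∧ v'.support ⊆ v.support ∧
      (∀ a, ProjE Erel a b → a ∉ v'.support) ∧
      v - (σ • Finsupp.single b 1 + v') ∈ NE Erel := by
  obtain ⟨σ, hσ⟩ := collapse b (classPart Erel b v) fun a ha => classPart_support_projE ha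
  have hkey : ∀ a, ProjE Erel a b → a ∉ (v - classPart Erel b v).support := by
    intro a hp hmem
    rw [Finsupp.mem_support_iff, Finsupp.sub_apply, classPart_apply, if_pos hp,
      sub_self] at hmem
    exact hmem rfl
  have hsub : (v - classPart Erel b v).support ⊆ v.support := by
    intro a ha
    rw [Finsupp.mem_support_iff] at ha ⊢
    rw [Finsupp.sub_apply, classPart_apply] at ha
    intro h0
    apply ha
    split_ifs <;> simp [h0]
  refine ⟨σ, v - classPart Erel b v, ?_, hsub, hkey, ?_⟩
  · rintro ⟨a, ha, hba⟩
    exact hkey a (projE_symm hba) ha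
  · have he : v - (σ • Finsupp.single b 1 + (v - classPart Erel b v))
        = classPart Erel b v - σ • Finsupp.single b 1 := by module
    rw [he]; exact hσ

lemma source_smul_not_mem_NE
    (hadapted : ∀ b t, Rrel b t → b ∉ SuppE Erel t)
    (hterm : ¬ ∃ f : ℕ → (B →₀ k), ∀ n, PosStepL Rrel Erel (f n) (f (n + 1)))
    {b : B} {t : B →₀ k} {lam : k} (hR : Rrel b t) (hlam : lam ≠ 0)
    (h : lam • Finsupp.single b (1 : k) ∈ NE Erel) : False := by
  apply hterm
  refine ⟨fun n => ((n : k)) • (lam • t), fun n => ?_⟩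
  refine ⟨b, t, lam, ((n : k)) • (lam • t), hlam, hR, ?_, ?_, ?_⟩
  · exact not_mem_suppE_smul (not_mem_suppE_smul (hadapted b t hR))
  · apply econg_of_diff_mem
    have he : (n : k) • (lam • t) - (lam • Finsupp.single b 1 + (n : k) • (lam • t))
        = -(lam • Finsupp.single b (1 : k)) := by module
    rw [he]; exact Submodule.neg_mem _ h
  · apply econg_of_diff_mem
    have he : (lam • t + (n : k) • (lam • t)) - (((n + 1 : ℕ) : k)) • (lam • t) = 0 := by
      push_cast; module
    rw [he]; exact Submodule.zero_mem _

lemma isBNF_of_mem_support_nf {u : B →₀ k} (hu : u ∈ NFmod Rrel Erel) :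
    ∀ a ∈ u.support, IsBNF Rrel Erel a := by
  classical
  refine Submodule.span_induction (fun x hx => ?_) ?_ (fun x y _ _ ihx ihy a ha => ?_)
    (fun c x _ ihx a ha => ?_) hu
  · obtain ⟨b, hb, rfl⟩ := hx
    intro a ha
    have hab := Finset.mem_singleton.1 (Finsupp.support_single_subset ha)
    subst hab
    exact hb
  · intro a ha; simp at ha
  · rcases Finset.mem_union.1 (Finsupp.support_add ha) with h | h
    · exact ihx a h
    · exact ihy a h
  · exact ihx a (Finsupp.support_smul ha)

lemma mem_NFmod (v : B →₀ k) (h : ∀ a ∈ v.support, IsBNF Rrel Erel a) :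
    v ∈ NFmod Rrel Erel := by
  have hv : v = v.sum fun a m => m • Finsupp.single a (1 : k) := by
    conv_lhs => rw [← Finsupp.sum_single v]
    exact Finsupp.sum_congr fun a _ => by rw [Finsupp.smul_single, smul_eq_mul, mul_one]
  rw [hv]
  have hsingle : ∀ a : B, IsBNF Rrel Erel a → Finsupp.single a (1 : k) ∈ NFmod Rrel Erel :=
    fun a hA => Submodule.subset_span ⟨a, hA, rfl⟩
  rw [Finsupp.sum]
  exact Submodule.sum_mem _ fun a ha => Submodule.smul_mem _ _ (hsingle a (h a ha))

lemma nf_not_posStep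
    (hadapted : ∀ b t, Rrel b t → b ∉ SuppE Erel t)
    (hterm : ¬ ∃ f : ℕ → (B →₀ k), ∀ n, PosStepL Rrel Erel (f n) (f (n + 1)))
    {u w : B →₀ k} (hu : u ∈ NFmod Rrel Erel) (h : PosStepL Rrel Erel u w) : False := by
  obtain ⟨b, t, lam, v, hlam, hR, hbv, h1, _⟩ := h
  have hmem := classPart_mem_NE (b := b) (econg_diff_mem h1)
  have hu0 : classPart Erel b u = 0 :=
    classPart_eq_zero fun a ha hp => isBNF_of_mem_support_nf hu a ha ⟨b, t, hR, hp⟩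
  have hv0 : classPart Erel b v = 0 :=
    classPart_eq_zero fun a ha hp => hbv ⟨a, ha, projE_symm hp⟩
  rw [classPart_sub, classPart_add, classPart_smul,
    classPart_single_pos _ (projE_refl b), hu0, hv0, add_zero, zero_sub] at hmem
  exact source_smul_not_mem_NE hadapted hterm hR hlam (by simpa using (NE Erel).neg_mem hmem)

lemma posStep_econg_left {x u w : B →₀ k} (h : ECong Erel x u)
    (hs : PosStepL Rrel Erel u w) : PosStepL Rrel Erel x w := by
  obtain ⟨b, t, lam, v, hlam, hR, hb, h1, h2⟩ := hs
  exact ⟨b, t, lam, v, hlam, hR, hb, econg_trans h h1, h2⟩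

lemma posStep_econg_right {u w y : B →₀ k} (hs : PosStepL Rrel Erel u w)
    (h : ECong Erel w y) : PosStepL Rrel Erel u y := by
  obtain ⟨b, t, lam, v, hlam, hR, hb, h1, h2⟩ := hs
  exact ⟨b, t, lam, v, hlam, hR, hb, h1, econg_trans h2 h⟩

lemma transGen_econg_left {x u w : B →₀ k} (h : ECong Erel x u)
    (ht : Relation.TransGen (PosStepL Rrel Erel) u w) :
    Relation.TransGen (PosStepL Rrel Erel) x w := by
  induction ht with
  | single hs => exact Relation.TransGen.single (posStep_econg_left h hs)
  | tail _ hs ih => exact Relation.TransGen.tail ih hs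

lemma transGen_econg_right {u w y : B →₀ k}
    (ht : Relation.TransGen (PosStepL Rrel Erel) u w) (h : ECong Erel w y) :
    Relation.TransGen (PosStepL Rrel Erel) u y := by
  cases ht with
  | single hs => exact Relation.TransGen.single (posStep_econg_right hs h)
  | tail h1 hs => exact Relation.TransGen.tail h1 (posStep_econg_right hs h)

lemma pseq_refl (u : B →₀ k) : PSeq Rrel Erel u u := Or.inl (econg_refl u)

lemma pseq_trans {u v w : B →₀ k} (h1 : PSeq Rrel Erel u v) (h2 : PSeq Rrel Erel v w) :
    PSeq Rrel Erel u w := by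
  rcases h1 with h1 | h1 <;> rcases h2 with h2 | h2
  · exact Or.inl (econg_trans h1 h2)
  · exact Or.inr (transGen_econg_left h1 h2)
  · exact Or.inr (transGen_econg_right h1 h2)
  · exact Or.inr (h1.trans h2)

lemma NE_le_NSub : NE Erel ≤ NSub Rrel Erel :=
  Submodule.span_mono Set.subset_union_right

lemma posStep_diff_mem {u w : B →₀ k} (h : PosStepL Rrel Erel u w) :
    u - w ∈ NSub Rrel Erel := by
  obtain ⟨b, t, lam, v, hlam, hR, hb, h1, h2⟩ := h
  have d1 := NE_le_NSub (Rrel := Rrel) (econg_diff_mem h1)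
  have d2 := NE_le_NSub (Rrel := Rrel) (econg_diff_mem h2)
  have d3 : Finsupp.single b (1 : k) - t ∈ NSub Rrel Erel :=
    Submodule.subset_span (Or.inl ⟨b, t, hR, rfl⟩)
  have he : u - w = (u - (lam • Finsupp.single b 1 + v))
      + lam • (Finsupp.single b (1 : k) - t) + ((lam • t + v) - w) := by module
  rw [he]
  exact Submodule.add_mem _ (Submodule.add_mem _ d1 (Submodule.smul_mem _ _ d3)) d2

lemma pseq_diff_mem {u v : B →₀ k} (h : PSeq Rrel Erel u v) : u - v ∈ NSub Rrel Erel := by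
  rcases h with h | h
  · exact NE_le_NSub (econg_diff_mem h)
  · induction h with
    | single hs => exact posStep_diff_mem hs
    | tail _ hs ih =>
      have := Submodule.add_mem _ ih (posStep_diff_mem hs)
      rwa [sub_add_sub_cancel] at this

lemma nf_pseq_diff
    (hadapted : ∀ b t, Rrel b t → b ∉ SuppE Erel t)
    (hterm : ¬ ∃ f : ℕ → (B →₀ k), ∀ n, PosStepL Rrel Erel (f n) (f (n + 1)))
    {u w : B →₀ k} (hu : u ∈ NFmod Rrel Erel) (h : PSeq Rrel Erel u w) :
    u - w ∈ NE Erel := by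
  rcases h with h | h
  · exact econg_diff_mem h
  · exfalso
    induction h with
    | single hs => exact nf_not_posStep hadapted hterm hu hs
    | tail _ _ ih => exact ih

/-- Joinability by positive rewriting sequences. -/
def Join (Rrel : B → (B →₀ k) → Prop) (Erel : B → B → kˣ → Prop) (u v : B →₀ k) : Prop :=
  ∃ w, PSeq Rrel Erel u w ∧ PSeq Rrel Erel v w

lemma join_refl (u : B →₀ k) : Join Rrel Erel u u := ⟨u, pseq_refl u, pseq_refl u⟩

lemma join_symm {u v : B →₀ k} (h : Join Rrel Erel u v) : Join Rrel Erel v u := by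
  obtain ⟨w, h1, h2⟩ := h; exact ⟨w, h2, h1⟩

lemma join_of_econg {u v : B →₀ k} (h : ECong Erel u v) : Join Rrel Erel u v :=
  ⟨v, Or.inl h, pseq_refl v⟩

lemma join_trans
    (hconf : ∀ u v v' : B →₀ k, PSeq Rrel Erel u v → PSeq Rrel Erel u v' →
      ∃ w, PSeq Rrel Erel v w ∧ PSeq Rrel Erel v' w)
    {u v w : B →₀ k} (h1 : Join Rrel Erel u v) (h2 : Join Rrel Erel v w) :
    Join Rrel Erel u w := by
  obtain ⟨a, hua, hva⟩ := h1
  obtain ⟨c, hvc, hwc⟩ := h2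
  obtain ⟨d, had, hcd⟩ := hconf v a c hva hvc
  exact ⟨d, pseq_trans hua had, pseq_trans hwc hcd⟩

lemma sstep_join
    (hadapted : ∀ b t, Rrel b t → b ∉ SuppE Erel t)
    {u w : B →₀ k} (h : SStepL Rrel Erel u w) : Join Rrel Erel u w := by
  obtain ⟨b, t, lam, v, hlam, hR, h1, h2⟩ := h
  obtain ⟨σ, v', hbv', -, -, hdec⟩ := decomp b v
  have d1 : u - (lam • Finsupp.single b 1 + v) ∈ NE Erel := econg_diff_mem h1
  have d2 : (lam • t + v) - w ∈ NE Erel := econg_diff_mem h2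
  have hbt : b ∉ SuppE Erel (lam • t + v') :=
    not_mem_suppE_add (not_mem_suppE_smul (hadapted b t hR)) hbv'
  by_cases hσt : lam + σ = 0
  · have hσ : σ ≠ 0 := fun h0 => hlam (by simpa [h0] using hσt)
    have hu' : ECong Erel u v' := by
      apply econg_of_diff_mem
      have he : u - v' = (u - (lam • Finsupp.single b 1 + v))
          + (v - (σ • Finsupp.single b 1 + v')) + (lam + σ) • Finsupp.single b 1 := by module
      rw [hσt, zero_smul, add_zero] at he
      rw [he]
      exact Submodule.add_mem _ d1 hdec
    refine ⟨v', Or.inl hu', Or.inr (Relation.TransGen.single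
      ⟨b, t, σ, lam • t + v', hσ, hR, hbt, ?_, ?_⟩)⟩
    · apply econg_of_diff_mem
      have he : w - (σ • Finsupp.single b 1 + (lam • t + v'))
          = (-(1 : k)) • ((lam • t + v) - w) + (v - (σ • Finsupp.single b 1 + v')) := by module
      rw [he]
      exact Submodule.add_mem _ (Submodule.smul_mem _ _ d2) hdec
    · apply econg_of_diff_mem
      have he : (σ • t + (lam • t + v')) - v' = (lam + σ) • t := by module
      rw [he, hσt, zero_smul]
      exact Submodule.zero_mem _
  · have stepu : PosStepL Rrel Erel u ((lam + σ) • t + v') := by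
      refine ⟨b, t, lam + σ, v', hσt, hR, hbv', ?_, econg_refl _⟩
      apply econg_of_diff_mem
      have he : u - ((lam + σ) • Finsupp.single b 1 + v')
          = (u - (lam • Finsupp.single b 1 + v))
            + (v - (σ • Finsupp.single b 1 + v')) := by module
      rw [he]
      exact Submodule.add_mem _ d1 hdec
    by_cases hσ : σ = 0
    · subst hσ
      refine ⟨(lam + 0) • t + v', Or.inr (Relation.TransGen.single stepu), Or.inl ?_⟩
      apply econg_of_diff_mem
      have he : w - ((lam + 0) • t + v') = (-(1 : k)) • ((lam • t + v) - w)
          + (v - ((0 : k) • Finsupp.single b 1 + v')) := by module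
      rw [he]
      exact Submodule.add_mem _ (Submodule.smul_mem _ _ d2) hdec
    · have stepw : PosStepL Rrel Erel w ((lam + σ) • t + v') := by
        refine ⟨b, t, σ, lam • t + v', hσ, hR, hbt, ?_, ?_⟩
        · apply econg_of_diff_mem
          have he : w - (σ • Finsupp.single b 1 + (lam • t + v'))
              = (-(1 : k)) • ((lam • t + v) - w)
                + (v - (σ • Finsupp.single b 1 + v')) := by module
          rw [he]
          exact Submodule.add_mem _ (Submodule.smul_mem _ _ d2) hdec
        · apply econg_of_diff_mem
          have he : (σ • t + (lam • t + v')) - ((lam + σ) • t + v') = 0 := by module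
          rw [he]
          exact Submodule.zero_mem _
      exact ⟨(lam + σ) • t + v', Or.inr (Relation.TransGen.single stepu),
        Or.inr (Relation.TransGen.single stepw)⟩

lemma normalize
    (hterm : ¬ ∃ f : ℕ → (B →₀ k), ∀ n, PosStepL Rrel Erel (f n) (f (n + 1)))
    (u : B →₀ k) :
    ∃ v, PSeq Rrel Erel u v ∧ ∀ w, ¬ PosStepL Rrel Erel v w := by
  have hwf : WellFounded (fun a c : B →₀ k => PosStepL Rrel Erel c a) := by
    by_contra hnwf
    apply hterm
    have hx : ∃ x, ¬ Acc (fun a c : B →₀ k => PosStepL Rrel Erel c a) x := by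
      by_contra h
      push_neg at h
      exact hnwf ⟨h⟩
    have hstep : ∀ x : {a : B →₀ k // ¬ Acc (fun a c : B →₀ k => PosStepL Rrel Erel c a) a},
        ∃ y : {a : B →₀ k // ¬ Acc (fun a c : B →₀ k => PosStepL Rrel Erel c a) a},
          PosStepL Rrel Erel x.1 y.1 := by
      rintro ⟨x, hx⟩
      by_contra h
      push_neg at h
      apply hx
      constructor
      intro y hy
      by_contra hny
      exact h ⟨y, hny⟩ hy
    choose g hg using hstep
    obtain ⟨x0, hx0⟩ := hx
    refine ⟨fun n => (g^[n] ⟨x0, hx0⟩).1, fun n => ?_⟩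
    have hit : g^[n + 1] ⟨x0, hx0⟩ = g (g^[n] ⟨x0, hx0⟩) := by
      rw [Function.iterate_succ', Function.comp_apply]
    show PosStepL Rrel Erel (↑(g^[n] ⟨x0, hx0⟩)) (↑(g^[n + 1] ⟨x0, hx0⟩))
    rw [hit]
    exact hg _
  refine hwf.induction
    (C := fun u => ∃ v, PSeq Rrel Erel u v ∧ ∀ w, ¬ PosStepL Rrel Erel v w) u ?_
  intro u ih
  by_cases h : ∃ w, PosStepL Rrel Erel u w
  · obtain ⟨w, hw⟩ := h
    obtain ⟨v, hv1, hv2⟩ := ih w hw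
    refine ⟨v, ?_, hv2⟩
    rcases hv1 with h' | h'
    · exact Or.inr (Relation.TransGen.single (posStep_econg_right hw h'))
    · exact Or.inr (Relation.TransGen.head hw h')
  · exact ⟨u, pseq_refl u, fun w hw => h ⟨w, hw⟩⟩

lemma irreducible_nf :
    ∀ (n : ℕ) (v : B →₀ k), v.support.card ≤ n →
    (∀ w, ¬ PosStepL Rrel Erel v w) →
    ∃ u ∈ NFmod Rrel Erel, v - u ∈ NE Erel := by
  intro n
  induction n with
  | zero =>
    intro v hcard _
    have hv : v = 0 := by
      rwa [Nat.le_zero, Finset.card_eq_zero, Finsupp.support_eq_empty] at hcard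
    exact ⟨0, Submodule.zero_mem _, by simp [hv]⟩
  | succ n ihn =>
    intro v hcard hirr
    by_cases hbnf : ∀ a ∈ v.support, IsBNF Rrel Erel a
    · exact ⟨v, mem_NFmod v hbnf, by simp⟩
    · push_neg at hbnf
      obtain ⟨a, ha, hna⟩ := hbnf
      obtain ⟨b, t, hR, hab⟩ := not_not.1 hna
      obtain ⟨σ, v', hbv', hsub, hkey, hdec⟩ := decomp b v
      have hσ : σ = 0 := by
        by_contra hσ
        exact hirr (σ • t + v')
          ⟨b, t, σ, v', hσ, hR, hbv', econg_of_diff_mem hdec, econg_refl _⟩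
      rw [hσ, zero_smul, zero_add] at hdec
      have hirr' : ∀ w, ¬ PosStepL Rrel Erel v' w := fun w hw =>
        hirr w (posStep_econg_left (econg_of_diff_mem hdec) hw)
      have hcard' : v'.support.card ≤ n := by
        have hss : v'.support ⊂ v.support :=
          (Finset.ssubset_iff_of_subset hsub).2 ⟨a, ha, hkey a hab⟩
        exact Nat.lt_succ_iff.1 (lt_of_lt_of_le (Finset.card_lt_card hss) hcard)
      obtain ⟨u, hu, hvu⟩ := ihn v' hcard' hirr'
      refine ⟨u, hu, ?_⟩
      have := Submodule.add_mem _ hdec hvu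
      rwa [sub_add_sub_cancel] at this

/-- A single zigzag generator: an `S`-rewriting step or an `E`-step. -/
def SERel (Rrel : B → (B →₀ k) → Prop) (Erel : B → B → kˣ → Prop) (u v : B →₀ k) : Prop :=
  SStepL Rrel Erel u v ∨ EStepV Erel u v

lemma zz_sub {d : B →₀ k} (hd : d ∈ NSub Rrel Erel) :
    ∀ (u : B →₀ k) (c : k), Relation.EqvGen (SERel Rrel Erel) u (u - c • d) := by
  refine Submodule.span_induction (fun x hx => ?_) (fun u c => ?_)
    (fun x y hx hy ihx ihy u c => ?_) (fun a x hx ihx u c => ?_) hd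
  · rcases hx with ⟨b, t, hR, rfl⟩ | hE
    · intro u c
      by_cases hc : c = 0
      · rw [hc, zero_smul, sub_zero]; exact Relation.EqvGen.refl u
      · apply Relation.EqvGen.symm
        apply Relation.EqvGen.rel
        refine Or.inl ⟨b, t, -c, u + c • t, neg_ne_zero.2 hc, hR, ?_, ?_⟩
        · apply econg_of_diff_mem
          have he : (u - c • (Finsupp.single b 1 - t))
              - ((-c) • Finsupp.single b 1 + (u + c • t)) = 0 := by module
          rw [he]; exact Submodule.zero_mem _
        · apply econg_of_diff_mem
          have he : ((-c) • t + (u + c • t)) - u = 0 := by module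
          rw [he]; exact Submodule.zero_mem _
    · intro u c
      have hx' : _ ∈ NE Erel := Submodule.subset_span hE
      exact Relation.EqvGen.mono (fun p q h => Or.inr h) _ _ (econg_sub_all hx' u c)
  · simpa using Relation.EqvGen.refl (r := SERel Rrel Erel) u
  · have h1 := ihx u c
    have h2 := ihy (u - c • x) c
    refine Relation.EqvGen.trans _ _ _ h1 ?_
    have he : u - c • (x + y) = u - c • x - c • y := by module
    rw [he]; exact h2
  · have h1 := ihx u (c * a)
    rw [smul_smul]; exact h1

lemma zz_join
    (hadapted : ∀ b t, Rrel b t → b ∉ SuppE Erel t)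
    (hconf : ∀ u v v' : B →₀ k, PSeq Rrel Erel u v → PSeq Rrel Erel u v' →
      ∃ w, PSeq Rrel Erel v w ∧ PSeq Rrel Erel v' w)
    {u v : B →₀ k} (h : Relation.EqvGen (SERel Rrel Erel) u v) :
    Join Rrel Erel u v := by
  induction h with
  | rel x y hxy =>
    rcases hxy with hs | he
    · exact sstep_join hadapted hs
    · exact join_of_econg (Relation.EqvGen.rel _ _ he)
  | refl x => exact join_refl x
  | symm x y _ ih => exact join_symm ih
  | trans x y z _ _ ih1 ih2 => exact join_trans hconf ih1 ih2

lemma mkQ_sum {B' : Set B} (p : Submodule k (B →₀ k)) (c : ↥B' →₀ k) :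
    p.mkQ (c.sum fun (i : ↥B') (a : k) => a • Finsupp.single (i : B) (1 : k))
      = c.sum fun (i : ↥B') (a : k) => a • p.mkQ (Finsupp.single (i : B) (1 : k)) := by
  rw [map_finsuppSum]
  exact Finsupp.sum_congr fun i _ => by rw [map_smul]

end Stmt10Aux

/-- **Basis from convergence.**
Let `S = (B; R, E)` be a linear rewriting system modulo (`R` left-monomial and
`E`-adapted, `E` monomial-invertible), and let `B' ⊆ BNF_S` be a set of
monomial `S⁺`-normal forms whose image `[B']_E` is a basis of the module
`NF_S / ⟨E⟩_k` of normal forms modulo `E`.  If the positive rewriting system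
`S⁺` is convergent modulo `E` (terminating and confluent), then the image
`[B']_S` is a basis of the module `⟨B⟩_k / ⟨R ⊔ E⟩_k` presented by `S`. -/
theorem stmt10 {k : Type*} [CommRing k] {B : Type*}
    (Rrel : B → (B →₀ k) → Prop) (Erel : B → B → kˣ → Prop)
    (hadapted : ∀ b t, Rrel b t → b ∉ SuppE Erel t)
    (B' : Set B) (hB' : ∀ b ∈ B', IsBNF Rrel Erel b)
    -- `[B']_E` is a basis of `NF_S / ⟨E⟩_k`:
    (hindE : LinearIndependent k
      (fun b : B' => (NE Erel).mkQ (Finsupp.single (b : B) (1 : k))))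
    (hspanE : Submodule.span k
        (Set.range fun b : B' => (NE Erel).mkQ (Finsupp.single (b : B) (1 : k))) =
      Submodule.map (NE Erel).mkQ (NFmod Rrel Erel))
    -- `S⁺` is terminating modulo `E`:
    (hterm : ¬ ∃ f : ℕ → (B →₀ k), ∀ n, PosStepL Rrel Erel (f n) (f (n + 1)))
    -- and confluent:
    (hconf : ∀ u v v' : B →₀ k, PSeq Rrel Erel u v → PSeq Rrel Erel u v' →
      ∃ w, PSeq Rrel Erel v w ∧ PSeq Rrel Erel v' w) :
    LinearIndependent k
      (fun b : B' => (NSub Rrel Erel).mkQ (Finsupp.single (b : B) (1 : k))) ∧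
    Submodule.span k
      (Set.range fun b : B' =>
        (NSub Rrel Erel).mkQ (Finsupp.single (b : B) (1 : k))) = ⊤ := by
    classical
  constructor
  · rw [linearIndependent_iff] at hindE ⊢
    intro l hl
    have hmk1 : (NSub Rrel Erel).mkQ
        (l.sum fun (i : ↥B') (a : k) => a • Finsupp.single (i : B) (1 : k)) = 0 := by
      rw [Stmt10Aux.mkQ_sum]
      rw [Finsupp.linearCombination_apply] at hl
      exact hl
    have hunsub : (l.sum fun (i : ↥B') (a : k) => a • Finsupp.single (i : B) (1 : k))
        ∈ NSub Rrel Erel := by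
      rwa [Submodule.mkQ_apply, Submodule.Quotient.mk_eq_zero] at hmk1
    have hunf : (l.sum fun (i : ↥B') (a : k) => a • Finsupp.single (i : B) (1 : k))
        ∈ NFmod Rrel Erel := by
      rw [Finsupp.sum]
      exact Submodule.sum_mem _ fun i _ =>
        Submodule.smul_mem _ _ (Submodule.subset_span ⟨(i : B), hB' i i.2, rfl⟩)
    have hzz := Stmt10Aux.zz_sub hunsub
        (l.sum fun (i : ↥B') (a : k) => a • Finsupp.single (i : B) (1 : k)) 1
    rw [one_smul, sub_self] at hzz
    obtain ⟨w, hw1, hw2⟩ := Stmt10Aux.zz_join hadapted hconf hzz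
    have d1 := Stmt10Aux.nf_pseq_diff hadapted hterm hunf hw1
    have d2 := Stmt10Aux.nf_pseq_diff hadapted hterm ((NFmod Rrel Erel).zero_mem) hw2
    have hune : (l.sum fun (i : ↥B') (a : k) => a • Finsupp.single (i : B) (1 : k))
        ∈ NE Erel := by
      have h3 := Submodule.sub_mem _ d1 d2
      rwa [sub_sub_sub_cancel_right, sub_zero] at h3
    apply hindE
    have hmk2 := Stmt10Aux.mkQ_sum (B' := B') (NE Erel) l
    rw [Finsupp.linearCombination_apply]
    refine Eq.trans hmk2.symm ?_
    rw [Submodule.mkQ_apply, Submodule.Quotient.mk_eq_zero]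
    exact hune
  · rw [eq_top_iff]
    rintro x -
    obtain ⟨u, rfl⟩ := Submodule.Quotient.mk_surjective (NSub Rrel Erel) x
    obtain ⟨v, hv1, hv2⟩ := Stmt10Aux.normalize hterm u
    obtain ⟨w, hw, hvw⟩ := Stmt10Aux.irreducible_nf v.support.card v le_rfl hv2
    have hwmap : (NE Erel).mkQ w ∈ Submodule.map (NE Erel).mkQ (NFmod Rrel Erel) :=
      ⟨w, hw, rfl⟩
    rw [← hspanE, Finsupp.mem_span_range_iff_exists_finsupp] at hwmap
    obtain ⟨c, hc⟩ := hwmap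
    have hmk2 := Stmt10Aux.mkQ_sum (B' := B') (NE Erel) c
    have hww' : w - (c.sum fun (i : ↥B') (a : k) => a • Finsupp.single (i : B) (1 : k))
        ∈ NE Erel := by
      rw [← Submodule.Quotient.mk_eq_zero (NE Erel), ← Submodule.mkQ_apply, map_sub,
        hmk2, sub_eq_zero]
      exact hc.symm
    have huw : u - (c.sum fun (i : ↥B') (a : k) => a • Finsupp.single (i : B) (1 : k))
        ∈ NSub Rrel Erel := by
      have d1 := Stmt10Aux.pseq_diff_mem hv1
      have d2 := Stmt10Aux.NE_le_NSub (Rrel := Rrel) hvw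
      have d3 := Stmt10Aux.NE_le_NSub (Rrel := Rrel) hww'
      have h4 := Submodule.add_mem _ (Submodule.add_mem _ d1 d2) d3
      rwa [sub_add_sub_cancel, sub_add_sub_cancel] at h4
    have hq : Submodule.Quotient.mk (p := NSub Rrel Erel) u
        = (NSub Rrel Erel).mkQ
          (c.sum fun (i : ↥B') (a : k) => a • Finsupp.single (i : B) (1 : k)) := by
      rw [Submodule.mkQ_apply]
      exact (Submodule.Quotient.eq _).2 huw
    rw [hq, Stmt10Aux.mkQ_sum, Finsupp.mem_span_range_iff_exists_finsupp]
    exact ⟨c, rfl⟩
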